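/- For every integer k ≥ 1 the metric space Δ_k embeds isometrically into C([0, ω^k]): there exists a map φ : Δ_k → C([0, ω^k]) with ‖φ(σ) − φ(τ)‖_∞ = d_Δ(σ,τ) for all σ, τ ∈ Δ_k. -/

import Mathlib

/-- The compact space `[0, α]` of ordinals `≤ α` with the order topology. -/
noncomputable instance (a : Ordinal) : CompactSpace (Set.Iic a) :=
  isCompact_iff_compactSpace.mp (by rw [← Set.Icc_bot]; exact isCompact_Icc)

open Ordinal Set

lemma isOpen_Iic_ord (a : Ordinal) : IsOpen (Set.Iic a) := by
  rw [← Order.Iio_succ]; exact isOpen_Iio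

lemma isClopen_Ioc_ord (a b : Ordinal) : IsClopen (Set.Ioc a b) := by
  constructor
  · rw [← Set.Ioi_inter_Iic, ← Set.compl_Iic]
    exact ((isOpen_Iic_ord a).isClosed_compl).inter isClosed_Iic
  · rw [← Set.Ioi_inter_Iic, ← Order.Iio_succ]
    exact isOpen_Ioi.inter isOpen_Iio

lemma continuous_addLeft_ord (c : Ordinal) : Continuous (c + ·) :=
  (Order.isNormal_iff_strictMono_and_continuous.mp (Ordinal.isNormal_add_right c)).2

lemma isClopen_image_add_ord {S : Set Ordinal} (c b : Ordinal) (hS : IsClopen S)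
    (hb : S ⊆ Set.Ioc 0 b) : IsClopen ((c + ·) '' S) := by
  constructor
  · have hIic : IsCompact (Set.Iic b) := by rw [← Set.Icc_bot]; exact isCompact_Icc
    have hcpt : IsCompact S :=
      hIic.of_isClosed_subset hS.isClosed (fun x hx => (hb hx).2)
    exact (hcpt.image (continuous_addLeft_ord c)).isClosed
  · rw [isOpen_iff_mem_nhds]
    rintro y ⟨x, hxS, rfl⟩
    have hx0 : x ≠ 0 := ((hb hxS).1).ne'
    obtain ⟨u, hu, husub⟩ := (SuccOrder.hasBasis_nhds_Ioc_of_exists_lt ⟨0, (hb hxS).1⟩).mem_iff.mp (hS.isOpen.mem_nhds hxS)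
    rw [mem_nhds_iff]
    refine ⟨Set.Ioc (c + u) (c + x), ?_, (isClopen_Ioc_ord _ _).isOpen, ?_⟩
    · intro w hw
      have hcw : c ≤ w := le_trans (le_self_add (a := c) (b := u)) hw.1.le
      refine ⟨w - c, husub ⟨?_, ?_⟩, Ordinal.add_sub_cancel_of_le hcw⟩
      · have h1 := hw.1; rwa [← Ordinal.add_sub_cancel_of_le hcw, add_lt_add_iff_left] at h1
      · have h2 := hw.2; rwa [← Ordinal.add_sub_cancel_of_le hcw, add_le_add_iff_left] at h2
    · exact ⟨(add_lt_add_iff_left c).2 hu, le_rfl⟩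

lemma exists_clopen_family : ∀ k : ℕ, ∃ V : ℕ → Set Ordinal,
    (∀ n, IsClopen (V n)) ∧ (∀ n, V n ⊆ Set.Ioo 0 (omega0 ^ (k : Ordinal))) ∧
    (∀ τ : Finset ℕ, τ.card ≤ k → ∃ p : Ordinal,
       0 < p ∧ p ≤ omega0 ^ (k : Ordinal) ∧ ∀ n, (p ∈ V n ↔ n ∈ τ)) := by
  intro k
  induction k with
  | zero =>
    refine ⟨fun _ => ∅, fun n => isClopen_empty, fun n => empty_subset _, ?_⟩
    intro τ hτ
    have : τ = ∅ := Finset.card_eq_zero.mp (Nat.le_zero.mp hτ)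
    subst this
    exact ⟨1, zero_lt_one, by simp, fun n => by simp⟩
  | succ k ih =>
    obtain ⟨V, hclopen, hsub, hreal⟩ := ih
    set e : Ordinal := omega0 ^ (k : Ordinal) with he
    have he0 : 0 < e := opow_pos _ omega0_pos
    have htop : omega0 ^ ((k + 1 : ℕ) : Ordinal) = e * omega0 := by
      rw [Nat.cast_add, Nat.cast_one, opow_add, opow_one]
    have hstep : ∀ x : Ordinal, e * x + e = e * (x + 1) := fun x => by
      rw [Ordinal.add_one_eq_succ, Ordinal.mul_succ]
    have hass : ∀ m : ℕ, (m : Ordinal) + 1 + 1 = (m : Ordinal) + 2 := fun m => by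
      rw [add_assoc, one_add_one_eq_two]
    have hcast : ∀ m : ℕ, ((m : Ordinal) + 2) = ((m + 2 : ℕ) : Ordinal) := fun m => by
      push_cast; rfl
    have hblt : ∀ m : ℕ, e * ((m : Ordinal) + 2) < e * omega0 := fun m => by
      rw [mul_lt_mul_iff_right₀ he0, hcast]; exact nat_lt_omega0 _
    set W : ℕ → Set Ordinal := fun n =>
      Set.Ioc (e * ((n : Ordinal) + 1)) (e * ((n : Ordinal) + 2)) ∪
        ⋃ m ∈ Finset.range n, ((e * ((m : Ordinal) + 1) + ·) '' V (n - m - 1)) with hW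
    have hWsub : ∀ n, W n ⊆ Set.Ioo 0 (e * omega0) := by
      intro n x hx
      rcases hx with hx | hx
      · exact ⟨lt_of_le_of_lt zero_le hx.1, lt_of_le_of_lt hx.2 (hblt n)⟩
      · simp only [Set.mem_iUnion] at hx
        obtain ⟨m, hm, y, hyV, rfl⟩ := hx
        have hy := hsub _ hyV
        have hm1 : (0 : Ordinal) < (m : Ordinal) + 1 :=
          lt_of_lt_of_le zero_lt_one le_add_self
        constructor
        · exact lt_of_lt_of_le (mul_pos he0 hm1) le_self_add
        · have h1 : e * ((m : Ordinal) + 1) + y ≤ e * ((m : Ordinal) + 1) + e :=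
            (add_le_add_iff_left _).2 hy.2.le
          rw [hstep, hass] at h1
          exact lt_of_le_of_lt h1 (hblt m)
    have hblock : ∀ n : ℕ, ∀ q : Ordinal, 0 < q → q ≤ e →
        e * ((n : Ordinal) + 1) + q ∈ Set.Ioc (e * ((n : Ordinal) + 1)) (e * ((n : Ordinal) + 2)) := by
      intro n q hq0 hqe
      constructor
      · conv_lhs => rw [← add_zero (e * ((n : Ordinal) + 1))]
        exact (add_lt_add_iff_left _).2 hq0
      · have := (add_le_add_iff_left (e * ((n : Ordinal) + 1))).2 hqe
        rwa [hstep, hass] at this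
    have hdisj : ∀ n b : ℕ, ∀ p : Ordinal,
        p ∈ Set.Ioc (e * ((b : Ordinal) + 1)) (e * ((b : Ordinal) + 2)) →
        p ∈ Set.Ioc (e * ((n : Ordinal) + 1)) (e * ((n : Ordinal) + 2)) → n = b := by
      intro n b p hb hn
      by_contra hne
      rcases Nat.lt_or_ge n b with h | h
      · have h2 : (n : Ordinal) + 2 ≤ (b : Ordinal) + 1 := by
          rw [hcast n]
          exact_mod_cast Nat.cast_le.2 (by omega : n + 2 ≤ b + 1)
        have : p ≤ e * ((b : Ordinal) + 1) :=
          hn.2.trans ((mul_le_mul_iff_right₀ he0).2 h2)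
        exact absurd hb.1 (not_lt.2 this)
      · have hgt : b < n := by omega
        have h2 : (b : Ordinal) + 2 ≤ (n : Ordinal) + 1 := by
          rw [hcast b]
          exact_mod_cast Nat.cast_le.2 (by omega : b + 2 ≤ n + 1)
        have : p ≤ e * ((n : Ordinal) + 1) :=
          hb.2.trans ((mul_le_mul_iff_right₀ he0).2 h2)
        exact absurd hn.1 (not_lt.2 this)
    refine ⟨W, ?_, fun n => by rw [htop]; exact hWsub n, ?_⟩
    · intro n
      refine (isClopen_Ioc_ord _ _).union (isClopen_biUnion_finset ?_)
      intro m _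
      exact isClopen_image_add_ord _ e (hclopen _) (fun x hx => ⟨(hsub _ hx).1, (hsub _ hx).2.le⟩)
    · intro τ hτ
      rcases Finset.eq_empty_or_nonempty τ with rfl | hne
      · refine ⟨e * omega0, mul_pos he0 omega0_pos, htop.ge, ?_⟩
        intro n
        simp only [Finset.notMem_empty, iff_false]
        exact fun hmem => absurd (hWsub n hmem).2 (lt_irrefl _)
      · set b := τ.min' hne with hb
        have hbτ : b ∈ τ := τ.min'_mem hne
        set τ' : Finset ℕ := (τ.erase b).image (fun x => x - (b + 1)) with hτ'
        have hmem' : ∀ j : ℕ, j ∈ τ' ↔ (b + 1 + j) ∈ τ := by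
          intro j
          simp only [hτ', Finset.mem_image, Finset.mem_erase]
          constructor
          · rintro ⟨x, ⟨hxb, hxτ⟩, rfl⟩
            have : b ≤ x := τ.min'_le x hxτ
            have : b + 1 + (x - (b + 1)) = x := by omega
            rwa [this]
          · intro h
            exact ⟨b + 1 + j, ⟨by omega, h⟩, by omega⟩
        have hcard' : τ'.card ≤ k := by
          have h1 : τ'.card ≤ (τ.erase b).card := Finset.card_image_le
          have h2 : (τ.erase b).card = τ.card - 1 := Finset.card_erase_of_mem hbτ
          omega
        obtain ⟨q, hq0, hqe, hqV⟩ := hreal τ' hcard'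
        refine ⟨e * ((b : Ordinal) + 1) + q, ?_, ?_, ?_⟩
        · have hm1 : (0 : Ordinal) < (b : Ordinal) + 1 := lt_of_lt_of_le zero_lt_one le_add_self
          exact lt_of_lt_of_le (mul_pos he0 hm1) le_self_add
        · have h1 := (hblock b q hq0 hqe).2
          rw [htop]
          exact h1.trans (hblt b).le
        · intro n
          have hpblock := hblock b q hq0 hqe
          constructor
          · intro hmem
            rcases hmem with hx | hx
            · -- in the Ioc piece: n = b
              have hnb := hdisj n b _ hpblock hx
              rw [hnb]; exact hbτ
            · simp only [Set.mem_iUnion] at hx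
              obtain ⟨m, hm, y, hyV, heq⟩ := hx
              rw [Finset.mem_range] at hm
              have heq' : e * ((m : Ordinal) + 1) + y = e * ((b : Ordinal) + 1) + q := heq
              have hy := hsub _ hyV
              have hblk : e * ((m : Ordinal) + 1) + y ∈
                  Set.Ioc (e * ((m : Ordinal) + 1)) (e * ((m : Ordinal) + 2)) :=
                hblock m y hy.1 hy.2.le
              rw [heq'] at hblk
              have hmb : m = b := hdisj m b _ hpblock hblk
              subst hmb
              have hyq : y = q := (add_right_inj _).1 heq'
              subst hyq
              have hjτ : n - b - 1 ∈ τ' := (hqV _).1 hyV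
              rw [hmem'] at hjτ
              have heqn : b + 1 + (n - b - 1) = n := by omega
              rwa [heqn] at hjτ
          · intro hnτ
            by_cases hnb : n = b
            · subst hnb; exact Or.inl hpblock
            · have hbn : b < n := lt_of_le_of_ne (τ.min'_le n hnτ) (Ne.symm hnb)
              right
              simp only [Set.mem_iUnion]
              refine ⟨b, Finset.mem_range.2 hbn, q, ?_, rfl⟩
              rw [hqV, hmem']
              have : b + 1 + (n - b - 1) = n := by omega
              rwa [this]

/-- For every integer `k ≥ 1` the metric space `Δ_k` embeds isometrically into
`C([0, ω^k])`. -/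
theorem deltaK_isometric_C_omega_pow_k (k : ℕ) (hk : 1 ≤ k) :
    ∃ φ : {σ : Finset ℕ // σ.card ≤ k} → C(↥(Set.Iic (Ordinal.omega0 ^ (k : Ordinal))), ℝ),
      ∀ σ τ : {σ : Finset ℕ // σ.card ≤ k},
        ‖φ σ - φ τ‖ = ((symmDiff σ.1 τ.1).card : ℝ) := by
  classical
  obtain ⟨V, hclopen, hsub, hreal⟩ := exists_clopen_family k
  set X := ↥(Set.Iic (Ordinal.omega0 ^ (k : Ordinal))) with hX
  have hcont : ∀ n, Continuous (fun p : X => if (p : Ordinal) ∈ V n then (-1 : ℝ) else 1) := by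
    intro n
    have hloc : Continuous (fun o : Ordinal => if o ∈ V n then (-1 : ℝ) else 1) := by
      apply IsLocallyConstant.continuous
      intro s
      by_cases h1 : (-1 : ℝ) ∈ s <;> by_cases h0 : (1 : ℝ) ∈ s
      · convert isOpen_univ using 1
        ext o; by_cases ho : o ∈ V n <;> simp [ho, h1, h0]
      · convert (hclopen n).isOpen using 1
        ext o; by_cases ho : o ∈ V n <;> simp [ho, h1, h0]
      · convert (hclopen n).compl.isOpen using 1
        ext o; by_cases ho : o ∈ V n <;> simp [ho, h1, h0]
      · convert isOpen_empty using 1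
        ext o; by_cases ho : o ∈ V n <;> simp [ho, h1, h0]
    exact hloc.comp continuous_subtype_val
  set χ : ℕ → C(X, ℝ) := fun n => ⟨_, hcont n⟩ with hχ
  refine ⟨fun σ => ∑ n ∈ σ.1, χ n, ?_⟩
  intro σ τ
  set A := σ.1 \ τ.1 with hA'
  set B := τ.1 \ σ.1 with hB'
  have hcard : (symmDiff σ.1 τ.1).card = A.card + B.card := by
    rw [symmDiff_def, Finset.sup_eq_union, Finset.card_union_of_disjoint disjoint_sdiff_sdiff]
  have hdiff : ∀ p : X, (∑ n ∈ σ.1, χ n - ∑ n ∈ τ.1, χ n) p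
      = ∑ n ∈ A, χ n p - ∑ n ∈ B, χ n p := by
    intro p
    rw [ContinuousMap.sub_apply, ContinuousMap.sum_apply, ContinuousMap.sum_apply,
      ← Finset.sum_inter_add_sum_sdiff σ.1 τ.1 (fun n => χ n p),
      ← Finset.sum_inter_add_sum_sdiff τ.1 σ.1 (fun n => χ n p), Finset.inter_comm]
    ring
  have habs : ∀ n (p : X), |χ n p| ≤ 1 := by
    intro n p
    show |if (p : Ordinal) ∈ V n then (-1 : ℝ) else 1| ≤ 1
    split <;> simp
  have hbound : ∀ p : X, ‖(∑ n ∈ σ.1, χ n - ∑ n ∈ τ.1, χ n) p‖ ≤ ((symmDiff σ.1 τ.1).card : ℝ) := by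
    intro p
    rw [Real.norm_eq_abs, hdiff p, hcard]
    have hsA : ∑ n ∈ A, |χ n p| ≤ (A.card : ℝ) := by
      calc ∑ n ∈ A, |χ n p| ≤ ∑ _n ∈ A, (1 : ℝ) := Finset.sum_le_sum (fun n _ => habs n p)
        _ = A.card := by simp
    have hsB : ∑ n ∈ B, |χ n p| ≤ (B.card : ℝ) := by
      calc ∑ n ∈ B, |χ n p| ≤ ∑ _n ∈ B, (1 : ℝ) := Finset.sum_le_sum (fun n _ => habs n p)
        _ = B.card := by simp
    calc |∑ n ∈ A, χ n p - ∑ n ∈ B, χ n p| ≤ |∑ n ∈ A, χ n p| + |∑ n ∈ B, χ n p| := abs_sub _ _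
      _ ≤ ∑ n ∈ A, |χ n p| + ∑ n ∈ B, |χ n p| :=
          add_le_add (Finset.abs_sum_le_sum_abs _ _) (Finset.abs_sum_le_sum_abs _ _)
      _ ≤ (A.card : ℝ) + B.card := add_le_add hsA hsB
      _ = ((A.card + B.card : ℕ) : ℝ) := by push_cast; ring
  obtain ⟨p0, hp0pos, hp0le, hp0⟩ := hreal τ.1 τ.2
  set pp : X := ⟨p0, hp0le⟩ with hpp
  have hval : ∀ n : ℕ, χ n pp = if n ∈ τ.1 then (-1 : ℝ) else 1 := by
    intro n
    show (if (pp : Ordinal) ∈ V n then (-1 : ℝ) else 1) = _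
    by_cases h : n ∈ τ.1 <;> simp [h, hp0 n, hpp]
  have hAv : ∑ n ∈ A, χ n pp = (A.card : ℝ) := by
    have hc : ∀ n ∈ A, χ n pp = 1 := fun n hn => by
      rw [hval n, if_neg (Finset.mem_sdiff.1 hn).2]
    rw [Finset.sum_congr rfl hc, Finset.sum_const, _root_.nsmul_eq_mul, mul_one]
  have hBv : ∑ n ∈ B, χ n pp = -(B.card : ℝ) := by
    have hc : ∀ n ∈ B, χ n pp = -1 := fun n hn => by
      rw [hval n, if_pos (Finset.mem_sdiff.1 hn).1]
    rw [Finset.sum_congr rfl hc, Finset.sum_const, _root_.nsmul_eq_mul, mul_neg_one]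
  have hlow : ((symmDiff σ.1 τ.1).card : ℝ) ≤ ‖∑ n ∈ σ.1, χ n - ∑ n ∈ τ.1, χ n‖ := by
    refine le_trans ?_ (ContinuousMap.norm_coe_le_norm (∑ n ∈ σ.1, χ n - ∑ n ∈ τ.1, χ n) pp)
    rw [Real.norm_eq_abs, hdiff pp, hAv, hBv, hcard, sub_neg_eq_add]
    rw [abs_of_nonneg (by positivity)]
    push_cast; ring_nf; rfl
  exact le_antisymm ((ContinuousMap.norm_le _ (Nat.cast_nonneg _)).2 hbound) hlow
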